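/- Set M_n = ⌈n^{1/(2p+d)}⌉ with p = d/2 + 1 and let a_{n,1},…,a_{n,M_n^d} be the centers of the partition of [0,1]^d into M_n^d cubes of side length 1/M_n (so each component of a_{n,j} lies in {1/(2M_n) + k/M_n : k ∈ {0,…,M_n−1}}). Let C_{n,1},…,C_{n,M_n^d} be independent random variables, each uniformly distributed on {−1,1}. Then for n sufficiently large, P{ there exists ω ∈ ℝ^d with |Σ_{j=1}^{M_n^d} C_{n,j}·e^{iω^T a_{n,j}}| > (log n)·M_n^{d/2} } ≤ c₄₂/n for a constant c₄₂ > 0 not depending on n. In particular, by periodicity (the value of e^{iω^T a_{n,j}} is unchanged if any component of ω is shifted by 4π·M_n), the supremum over ω ∈ ℝ^d can be reduced to ω ∈ [−2π·M_n, 2π·M_n]^d and then to a finite grid, and the bound follows from the union bound and Hoeffding's inequality. -/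

import Mathlib

open MeasureTheory ProbabilityTheory
open scoped ENNReal

noncomputable section

abbrev Evec (d : ℕ) := EuclideanSpace ℝ (Fin d)

/-- The smoothness exponent `p = d/2 + 1`. -/
def pexp (d : ℕ) : ℝ := (d : ℝ) / 2 + 1

/-- `M_n = ⌈n^{1/(2p+d)}⌉`. -/
def MnD (d n : ℕ) : ℕ := ⌈(n : ℝ) ^ ((1 : ℝ) / (2 * pexp d + d))⌉₊

/-- The centers `a_{n,j}` of the cubes of the partition of `[0,1]^d` into `M_n^d` cubes of
side length `1/M_n`, indexed by `v : Fin d → Fin M_n`. -/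
def cubeCenter (d n : ℕ) (v : Fin d → Fin (MnD d n)) : Evec d :=
  WithLp.toLp 2 (fun i => 1 / (2 * (MnD d n : ℝ)) + (v i : ℝ) / (MnD d n : ℝ))

open Real Filter
set_option maxHeartbeats 1000000

lemma integrable_dirac' {f : ℝ → ℝ} (hf : StronglyMeasurable f) (a : ℝ) :
    Integrable f (Measure.dirac a) := by
  refine ⟨hf.aestronglyMeasurable, ?_⟩
  rw [HasFiniteIntegral]
  rw [MeasureTheory.lintegral_dirac]
  exact ENNReal.coe_lt_top

lemma mgf_rademacher_le' {Ω : Type} [MeasurableSpace Ω] (μ : Measure Ω)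
    (X : Ω → ℝ) (hX : Measurable X)
    (hlaw : Measure.map X μ = (2 : ℝ≥0∞)⁻¹ • (Measure.dirac (-1 : ℝ) + Measure.dirac (1 : ℝ)))
    (c t : ℝ) (hc : |c| ≤ 1) :
    mgf (fun ω => c * X ω) μ t ≤ exp (t ^ 2 / 2) := by
  have hg : StronglyMeasurable (fun x : ℝ => exp (t * (c * x))) :=
    (continuous_exp.comp (continuous_const.mul (continuous_const.mul continuous_id))).stronglyMeasurable
  have h1 : mgf (fun ω => c * X ω) μ t = ∫ x, exp (t * (c * x)) ∂(Measure.map X μ) := by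
    rw [mgf]
    rw [integral_map hX.aemeasurable hg.aestronglyMeasurable]
  rw [h1, hlaw]
  rw [integral_smul_measure, integral_add_measure (_root_.integrable_dirac' hg _) (_root_.integrable_dirac' hg _),
    integral_dirac, integral_dirac]
  have h2 : (2 : ℝ≥0∞)⁻¹.toReal = (2 : ℝ)⁻¹ := by simp
  rw [h2]
  have hcosh : (2 : ℝ)⁻¹ • (exp (t * (c * (-1))) + exp (t * (c * 1))) = Real.cosh (t * c) := by
    rw [Real.cosh_eq, smul_eq_mul]
    rw [show t * (c * (-1)) = -(t*c) by ring, show t * (c * 1) = t * c by ring]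
    ring
  rw [hcosh]
  calc Real.cosh (t * c) ≤ exp ((t * c) ^ 2 / 2) := Real.cosh_le_exp_half_sq _
    _ ≤ exp (t ^ 2 / 2) := by
        apply exp_le_exp.2
        have hc2 : c ^ 2 ≤ 1 := by nlinarith [abs_le.1 hc]
        nlinarith [sq_nonneg t, sq_nonneg (t*c)]

lemma ae_abs_le_one {Ω : Type} [MeasurableSpace Ω] (μ : Measure Ω)
    (X : Ω → ℝ) (hX : Measurable X)
    (hlaw : Measure.map X μ = (2 : ℝ≥0∞)⁻¹ • (Measure.dirac (-1 : ℝ) + Measure.dirac (1 : ℝ))) :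
    ∀ᵐ ω ∂μ, |X ω| ≤ 1 := by
  have hs : MeasurableSet {x : ℝ | ¬ |x| ≤ 1} :=
    ((measurableSet_le (measurable_id.abs) measurable_const)).compl
  have : μ (X ⁻¹' {x : ℝ | ¬ |x| ≤ 1}) = 0 := by
    rw [← Measure.map_apply hX hs, hlaw]
    simp only [Measure.smul_apply, Measure.add_apply, smul_eq_mul]
    rw [Measure.dirac_apply' _ hs, Measure.dirac_apply' _ hs]
    norm_num
  exact (measure_eq_zero_iff_ae_notMem.mp this).mono fun ω h => by simpa using h

lemma hoeffding_key {Ω : Type} [MeasurableSpace Ω] (μ : Measure Ω) [IsProbabilityMeasure μ]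
    {ι : Type} [Fintype ι]
    (X : ι → Ω → ℝ) (hmeas : ∀ i, Measurable (X i))
    (hindep : iIndepFun X μ)
    (hlaw : ∀ i, Measure.map (X i) μ
      = (2 : ℝ≥0∞)⁻¹ • (Measure.dirac (-1 : ℝ) + Measure.dirac (1 : ℝ)))
    (c : ι → ℝ) (hc : ∀ i, |c i| ≤ 1) (s : ℝ) (hs : 0 < s) :
    μ {ω | s ≤ ∑ i, c i * X i ω}
      ≤ ENNReal.ofReal (exp (-s ^ 2 / (2 * Fintype.card ι))) := by
  rcases Nat.eq_zero_or_pos (Fintype.card ι) with hcard | hcard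
  · have : IsEmpty ι := Fintype.card_eq_zero_iff.mp hcard
    have : {ω : Ω | s ≤ ∑ i, c i * X i ω} = ∅ := by
      ext ω; simp [Finset.sum_of_isEmpty, not_le, hs]
    rw [this]; simp
  · set Nc : ℝ := (Fintype.card ι : ℝ) with hNc
    have hNpos : (0 : ℝ) < Nc := by rw [hNc]; exact_mod_cast hcard
    set lam : ℝ := s / Nc with hlam
    have hlampos : 0 < lam := div_pos hs hNpos
    set Y : ι → Ω → ℝ := fun i ω => c i * X i ω with hY
    have hYmeas : ∀ i, Measurable (Y i) := fun i => (hmeas i).const_mul (c i)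
    have hYindep : iIndepFun Y μ := by
      exact hindep.comp (fun i x => c i * x) (fun i => measurable_const.mul measurable_id)
    have haebd : ∀ i, ∀ᵐ ω ∂μ, |X i ω| ≤ 1 := fun i => ae_abs_le_one μ (X i) (hmeas i) (hlaw i)
    -- the sum as a function
    have hsum : (∑ i, Y i) = fun ω => ∑ i, c i * X i ω := by
      funext ω; simp [hY, Finset.sum_apply]
    -- integrability of exp(lam * S)
    have haeS : ∀ᵐ ω ∂μ, |∑ i, c i * X i ω| ≤ Nc := by
      filter_upwards [ae_all_iff.2 haebd] with ω hω
      calc |∑ i, c i * X i ω| ≤ ∑ i, |c i * X i ω| := Finset.abs_sum_le_sum_abs _ _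
        _ ≤ ∑ _i : ι, (1 : ℝ) := by
            apply Finset.sum_le_sum
            intro i _
            rw [abs_mul]
            calc |c i| * |X i ω| ≤ 1 * 1 := by
                  apply mul_le_mul (hc i) (hω i) (abs_nonneg _) zero_le_one
              _ = 1 := by ring
        _ = Nc := by simp [hNc]
    have hSint : Integrable (fun ω => exp (lam * (∑ i, c i * X i ω))) μ := by
      apply Integrable.mono' (integrable_const (exp (lam * Nc)))
      · exact ((Finset.univ.measurable_sum
          (fun i _ => (hmeas i).const_mul (c i))).const_mul lam).exp.aestronglyMeasurable
      · filter_upwards [haeS] with ω hω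
        rw [Real.norm_eq_abs, abs_of_pos (exp_pos _), exp_le_exp]
        have := (abs_le.1 hω).2
        nlinarith [hlampos.le]
    -- Chernoff
    have hchern := measure_ge_le_exp_mul_mgf (μ := μ)
      (X := fun ω => ∑ i, c i * X i ω) (t := lam) s hlampos.le hSint
    -- mgf bound
    have hmgf : mgf (fun ω => ∑ i, c i * X i ω) μ lam ≤ exp (Nc * lam ^ 2 / 2) := by
      rw [← hsum, iIndepFun.mgf_sum hYindep hYmeas]
      calc ∏ i, mgf (Y i) μ lam ≤ ∏ _i : ι, exp (lam ^ 2 / 2) := by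
            apply Finset.prod_le_prod
            · intro i _; exact mgf_nonneg
            · intro i _; exact mgf_rademacher_le' μ (X i) (hmeas i) (hlaw i) (c i) lam (hc i)
        _ = exp (Nc * lam ^ 2 / 2) := by
            rw [Finset.prod_const, ← Real.exp_nat_mul]
            congr 1
            simp [hNc]; ring
    have hfinal : (μ {ω | s ≤ ∑ i, c i * X i ω}).toReal ≤ exp (-s ^ 2 / (2 * Nc)) := by
      calc (μ {ω | s ≤ ∑ i, c i * X i ω}).toReal
          ≤ exp (-lam * s) * mgf (fun ω => ∑ i, c i * X i ω) μ lam := hchern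
        _ ≤ exp (-lam * s) * exp (Nc * lam ^ 2 / 2) := by
            apply mul_le_mul_of_nonneg_left hmgf (exp_pos _).le
        _ = exp (-lam * s + Nc * lam ^ 2 / 2) := (Real.exp_add _ _).symm
        _ = exp (-s ^ 2 / (2 * Nc)) := by
            congr 1
            rw [hlam]
            field_simp
            ring
    rw [← ENNReal.ofReal_toReal (measure_ne_top μ _)]
    exact ENNReal.ofReal_le_ofReal hfinal

lemma exp_I_lip (x y : ℝ) :
    ‖Complex.exp (Complex.I * x) - Complex.exp (Complex.I * y)‖ ≤ 2 * |x - y| := by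
  have h1 : Complex.exp (Complex.I * x) - Complex.exp (Complex.I * y)
      = Complex.exp (Complex.I * y) * (Complex.exp (Complex.I * (x - y)) - 1) := by
    rw [mul_sub, ← Complex.exp_add, mul_one]
    push_cast
    ring_nf
  rw [h1, norm_mul, show ((x:ℂ) - (y:ℂ)) = ((x - y : ℝ) : ℂ) by push_cast; ring]
  have habs : ‖Complex.exp (Complex.I * y)‖ = 1 := by
    rw [mul_comm]; exact Complex.norm_exp_ofReal_mul_I y
  rw [habs, one_mul]
  have habs2 : ‖Complex.I * ((x - y : ℝ) : ℂ)‖ = |x - y| := by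
    rw [norm_mul, Complex.norm_I, one_mul, Complex.norm_real, Real.norm_eq_abs]
  rcases le_or_gt (|x - y|) 1 with h | h
  · have := Complex.norm_exp_sub_one_le (x := Complex.I * ((x - y : ℝ) : ℂ)) (by rw [habs2]; exact h)
    rwa [habs2] at this
  · calc ‖Complex.exp (Complex.I * ((x - y : ℝ) : ℂ)) - 1‖
        ≤ ‖Complex.exp (Complex.I * ((x - y : ℝ) : ℂ))‖ + ‖(1:ℂ)‖ := by
          exact (norm_sub_le _ _)
      _ ≤ 2 := by
          rw [mul_comm, Complex.norm_exp_ofReal_mul_I, norm_one]; norm_num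
      _ ≤ 2 * |x - y| := by nlinarith

lemma exp_I_re_im (a θ : ℝ) :
    ((a : ℂ) * Complex.exp (Complex.I * (θ : ℂ))).re = a * Real.cos θ ∧
    ((a : ℂ) * Complex.exp (Complex.I * (θ : ℂ))).im = a * Real.sin θ := by
  rw [mul_comm Complex.I, Complex.exp_mul_I]
  constructor
  · simp [Complex.cos_ofReal_re]
  · simp [Complex.sin_ofReal_re]

def tv (d n : ℕ) : ℝ := Real.log n * (MnD d n : ℝ) ^ ((d : ℝ) / 2)
def dv (d n : ℕ) : ℝ := tv d n / (4 * d * (MnD d n : ℝ) ^ d)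
def Kv (d n : ℕ) : ℕ := ⌈4 * π * (MnD d n : ℝ) / dv d n⌉₊

lemma one_le_MnD (d n : ℕ) (hn : 1 ≤ n) : 1 ≤ MnD d n := by
  rw [MnD]
  rw [Nat.one_le_iff_ne_zero, ← Nat.pos_iff_ne_zero, Nat.ceil_pos]
  apply Real.rpow_pos_of_pos
  exact_mod_cast hn

lemma MnD_le (d n : ℕ) (hn : 1 ≤ n) : MnD d n ≤ n := by
  rw [MnD, Nat.ceil_le]
  have h1 : (1 : ℝ) ≤ (n : ℝ) := by exact_mod_cast hn
  have h2 : (1 : ℝ) / (2 * pexp d + d) ≤ 1 := by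
    rw [pexp]
    rw [div_le_one (by positivity)]
    nlinarith [Nat.cast_nonneg (α := ℝ) d]
  calc (n : ℝ) ^ ((1:ℝ) / (2 * pexp d + d)) ≤ (n : ℝ) ^ (1 : ℝ) :=
        Real.rpow_le_rpow_of_exponent_le h1 h2
    _ = n := Real.rpow_one _

lemma log_ge_one {n : ℕ} (hn : 3 ≤ n) : 1 ≤ Real.log n := by
  rw [Real.le_log_iff_exp_le (by positivity)]
  calc Real.exp 1 ≤ 2.7182818286 := Real.exp_one_lt_d9.le
    _ ≤ (3 : ℝ) := by norm_num
    _ ≤ n := by exact_mod_cast hn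

lemma arith (d : ℕ) (hd : 0 < d) : ∃ N : ℕ, ∀ n, N ≤ n → 3 ≤ n ∧
    ((Kv d n + 1 : ℕ) : ℝ) ^ d * (4 * Real.exp (-(Real.log n) ^ 2 / 32)) ≤ 1 / n := by
  set A : ℝ := 66 * d with hA
  have hApos : 0 < A := by positivity
  set c₁ : ℝ := Real.log (4 * A ^ d) with hc₁
  set c₂ : ℝ := (d * (d + 1) : ℕ) + 1 with hc₂
  -- eventual inequality
  have htend : Tendsto (fun x : ℝ => x * (x / 32 - c₂) - c₁) atTop atTop := by
    apply tendsto_atTop_add_const_right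
    apply Tendsto.atTop_mul_atTop₀ tendsto_id
    apply tendsto_atTop_add_const_right
    exact tendsto_id.atTop_div_const (by norm_num)
  have hlogt : Tendsto (fun n : ℕ => Real.log n) atTop atTop :=
    Real.tendsto_log_atTop.comp tendsto_natCast_atTop_atTop
  have hev : ∀ᶠ n : ℕ in atTop,
      c₁ + c₂ * Real.log n ≤ (Real.log n) ^ 2 / 32 := by
    filter_upwards [(htend.comp hlogt).eventually_ge_atTop 0] with n hn
    simp only [Function.comp_apply] at hn
    nlinarith [hn]
  have hev3 : ∀ᶠ n : ℕ in atTop, 3 ≤ n := eventually_ge_atTop 3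
  obtain ⟨N, hN⟩ := eventually_atTop.1 (hev.and hev3)
  refine ⟨N, fun n hn => ?_⟩
  obtain ⟨hineq, h3⟩ := hN n hn
  refine ⟨h3, ?_⟩
  -- basic facts
  have hn1 : 1 ≤ n := by omega
  have hnR : (1 : ℝ) ≤ n := by exact_mod_cast hn1
  have hnpos : (0 : ℝ) < n := by linarith
  set M := MnD d n with hM
  have hM1 : 1 ≤ M := one_le_MnD d n hn1
  have hMr : (1 : ℝ) ≤ (M : ℝ) := by exact_mod_cast hM1
  have hMrpos : (0 : ℝ) < M := by linarith
  have hMn : (M : ℝ) ≤ n := by exact_mod_cast MnD_le d n hn1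
  have hlog1 : 1 ≤ Real.log n := log_ge_one h3
  have ht1 : 1 ≤ tv d n := by
    rw [tv]
    have : (1:ℝ) ≤ (M : ℝ) ^ ((d:ℝ)/2) := Real.one_le_rpow hMr (by positivity)
    nlinarith
  have hdvpos : 0 < dv d n := by
    rw [dv]
    have hd' : (0:ℝ) < d := by exact_mod_cast hd
    positivity
  -- bound on Kv
  have hKv : ((Kv d n + 1 : ℕ) : ℝ) ≤ A * (n : ℝ) ^ (d + 1) := by
    have hdR : (1:ℝ) ≤ d := by exact_mod_cast hd
    have hpow1 : (1:ℝ) ≤ (n:ℝ) ^ (d+1) := one_le_pow₀ hnR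
    have harg : 4 * π * (M : ℝ) / dv d n ≤ 64 * d * (n:ℝ) ^ (d + 1) := by
      rw [dv, div_div_eq_mul_div, div_le_iff₀ (by linarith : (0:ℝ) < tv d n)]
      have hMd : (M:ℝ) ^ d * (M:ℝ) ≤ (n:ℝ) ^ (d+1) := by
        rw [pow_succ]
        exact mul_le_mul (pow_le_pow_left₀ (by linarith) hMn d) hMn (by linarith) (by positivity)
      have hpi : π ≤ 4 := Real.pi_le_four
      calc 4 * π * (M:ℝ) * (4 * d * (M:ℝ)^d)
          = π * (16 * d * ((M:ℝ)^d * (M:ℝ))) := by ring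
        _ ≤ 4 * (16 * d * ((M:ℝ)^d * (M:ℝ))) := by
            exact mul_le_mul_of_nonneg_right hpi (by positivity)
        _ = 64 * d * ((M:ℝ)^d * (M:ℝ)) := by ring
        _ ≤ 64 * d * ((n:ℝ)^(d+1)) := by
            exact mul_le_mul_of_nonneg_left hMd (by positivity)
        _ ≤ 64 * d * (n:ℝ)^(d+1) * tv d n := by
            exact le_mul_of_one_le_right (by positivity) ht1
    have hceil : ((Kv d n : ℕ) : ℝ) < 4 * π * (M : ℝ) / dv d n + 1 := by
      rw [Kv]
      exact Nat.ceil_lt_add_one (by positivity)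
    push_cast
    calc ((Kv d n : ℕ) : ℝ) + 1 ≤ 64 * d * (n:ℝ)^(d+1) + 2 := by push_cast at hceil ⊢; linarith
      _ ≤ 66 * d * (n:ℝ)^(d+1) := by nlinarith [hdR, hpow1]
      _ = A * (n:ℝ)^(d+1) := by rw [hA]
  -- final chain
  have hexp : 4 * A ^ d * ((n:ℝ)^(d+1))^d * Real.exp (-(Real.log n)^2/32) ≤ 1/n := by
    have h4A : (0:ℝ) < 4 * A ^ d := by positivity
    have heq1 : ((n:ℝ)^(d+1))^d = Real.exp ((d*(d+1) : ℕ) * Real.log n) := by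
      rw [← pow_mul, ← Real.log_pow, Real.exp_log (by positivity)]
      ring_nf
    have heq2 : 4 * A ^ d = Real.exp c₁ := by rw [hc₁, Real.exp_log h4A]
    rw [heq1, heq2, ← Real.exp_add, ← Real.exp_add]
    rw [show (1:ℝ)/n = Real.exp (-Real.log n) by
      rw [Real.exp_neg, Real.exp_log hnpos]; ring]
    rw [Real.exp_le_exp]
    rw [hc₂] at hineq
    push_cast at hineq ⊢
    nlinarith
  calc ((Kv d n + 1 : ℕ) : ℝ) ^ d * (4 * Real.exp (-(Real.log n)^2/32))
      ≤ (A * (n:ℝ)^(d+1)) ^ d * (4 * Real.exp (-(Real.log n)^2/32)) := by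
        gcongr
      _ = 4 * A ^ d * ((n:ℝ)^(d+1))^d * Real.exp (-(Real.log n)^2/32) := by
        rw [mul_pow]; ring
      _ ≤ 1/n := hexp

def gridpt (d n : ℕ) (g : Fin d → Fin (Kv d n + 1)) : Evec d := WithLp.toLp 2 (fun i => dv d n * (g i : ℝ))

lemma inner_cubeCenter (d n : ℕ) (u : Evec d) (v : Fin d → Fin (MnD d n)) :
    (inner ℝ u (cubeCenter d n v) : ℝ)
      = ∑ i, u i * (1 / (2 * (MnD d n : ℝ)) + (v i : ℝ) / (MnD d n : ℝ)) := by
  rw [PiLp.inner_apply]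
  apply Finset.sum_congr rfl
  intro i _
  simp [RCLike.inner_apply, cubeCenter]
  ring

lemma exp_term_eq (d n : ℕ) (hM : 1 ≤ MnD d n) (v : Fin d → Fin (MnD d n)) (w w' : Evec d)
    (hw' : ∀ i, w' i = w i - 4 * π * (MnD d n : ℝ) * (⌊w i / (4 * π * (MnD d n : ℝ))⌋ : ℤ)) :
    Complex.exp (Complex.I * ((inner ℝ w' (cubeCenter d n v) : ℝ) : ℂ))
      = Complex.exp (Complex.I * ((inner ℝ w (cubeCenter d n v) : ℝ) : ℂ)) := by
  have hMrpos : (0 : ℝ) < MnD d n := by exact_mod_cast hM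
  set k : ℤ := ∑ i, ⌊w i / (4 * π * (MnD d n : ℝ))⌋ * (2 * (v i : ℤ) + 1) with hkdef
  have hθ : (inner ℝ w (cubeCenter d n v) : ℝ)
      = (inner ℝ w' (cubeCenter d n v) : ℝ) + 2 * π * (k : ℝ) := by
    rw [inner_cubeCenter, inner_cubeCenter, hkdef]
    push_cast
    rw [Finset.mul_sum, ← Finset.sum_add_distrib]
    apply Finset.sum_congr rfl
    intro i _
    rw [hw' i]
    field_simp
    ring
  rw [hθ]
  have hcast : (Complex.I * (((inner ℝ w' (cubeCenter d n v) : ℝ) + 2 * π * (k : ℝ) : ℝ) : ℂ))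
      = Complex.I * ((inner ℝ w' (cubeCenter d n v) : ℝ) : ℂ) + (k : ℂ) * (2 * π * Complex.I) := by
    push_cast
    ring
  rw [hcast, Complex.exp_add, Complex.exp_int_mul_two_pi_mul_I, mul_one]

lemma incl_core (d n : ℕ) (hd : 0 < d) (h3 : 3 ≤ n)
    (hM1 : 1 ≤ MnD d n) (hlog1 : 1 ≤ Real.log n)
    (r : (Fin d → Fin (MnD d n)) → ℝ) (hr : ∀ v, |r v| ≤ 1) (w : Evec d)
    (hw : tv d n < ‖∑ v, ((r v : ℝ) : ℂ) *
      Complex.exp (Complex.I * ((inner ℝ w (cubeCenter d n v) : ℝ) : ℂ))‖) :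
    ∃ g : Fin d → Fin (Kv d n + 1),
      tv d n / 4 ≤ ∑ v, Real.cos (inner ℝ (gridpt d n g) (cubeCenter d n v) : ℝ) * r v ∨
      tv d n / 4 ≤ ∑ v, -Real.cos (inner ℝ (gridpt d n g) (cubeCenter d n v) : ℝ) * r v ∨
      tv d n / 4 ≤ ∑ v, Real.sin (inner ℝ (gridpt d n g) (cubeCenter d n v) : ℝ) * r v ∨
      tv d n / 4 ≤ ∑ v, -Real.sin (inner ℝ (gridpt d n g) (cubeCenter d n v) : ℝ) * r v := by
  have hMr : (1 : ℝ) ≤ (MnD d n : ℝ) := by exact_mod_cast hM1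
  have hMrpos : (0 : ℝ) < (MnD d n : ℝ) := by linarith
  set t : ℝ := tv d n with htdef
  have hMhalf : (1 : ℝ) ≤ (MnD d n : ℝ) ^ ((d : ℝ) / 2) :=
    Real.one_le_rpow hMr (by positivity)
  have ht1 : 1 ≤ t := by rw [htdef, tv]; nlinarith
  have htpos : 0 < t := by linarith
  have hdR : (1 : ℝ) ≤ d := by exact_mod_cast hd
  set δ : ℝ := dv d n with hδdef
  have hδeq : δ = t / (4 * d * (MnD d n : ℝ) ^ d) := rfl
  have hδpos : 0 < δ := by rw [hδeq]; positivity
  set S : Evec d → ℂ := fun u => ∑ v, ((r v : ℝ) : ℂ) *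
      Complex.exp (Complex.I * ((inner ℝ u (cubeCenter d n v) : ℝ) : ℂ)) with hSdef
  -- bounds on cube center coordinates
  have ha01 : ∀ (v : Fin d → Fin (MnD d n)) (i : Fin d),
      0 ≤ 1 / (2 * (MnD d n : ℝ)) + ((v i : ℕ) : ℝ) / (MnD d n : ℝ) ∧
      1 / (2 * (MnD d n : ℝ)) + ((v i : ℕ) : ℝ) / (MnD d n : ℝ) ≤ 1 := by
    intro v i
    have hv : ((v i : ℕ) : ℝ) + 1 ≤ (MnD d n : ℝ) := by
      exact_mod_cast Nat.succ_le_of_lt (v i).isLt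
    have hv0 : (0:ℝ) ≤ ((v i : ℕ) : ℝ) := Nat.cast_nonneg _
    constructor
    · positivity
    · rw [div_add_div _ _ (by positivity) (by positivity), div_le_one (by positivity)]
      nlinarith
  -- periodic reduction
  set P : ℝ := 4 * π * (MnD d n : ℝ) with hPdef
  have hPpos : 0 < P := by rw [hPdef]; positivity
  set w' : Evec d := WithLp.toLp 2 (fun i => w i - P * (⌊w i / P⌋ : ℤ)) with hw'def
  have hw'range : ∀ i, 0 ≤ w' i ∧ w' i < P := by
    intro i
    have h1 : w' i = P * Int.fract (w i / P) := by
      rw [hw'def, Int.fract]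
      field_simp
    constructor
    · rw [h1]; exact mul_nonneg hPpos.le (Int.fract_nonneg _)
    · rw [h1]
      calc P * Int.fract (w i / P) < P * 1 := (mul_lt_mul_iff_right₀ hPpos).2 (Int.fract_lt_one _)
        _ = P := mul_one P
  have hSper : S w' = S w := by
    rw [hSdef]
    simp only
    apply Finset.sum_congr rfl
    intro v _
    rw [exp_term_eq d n hM1 v w w' (fun i => rfl)]
  -- grid point
  have hfloor_le : ∀ i, ⌊w' i / δ⌋₊ ≤ Kv d n := by
    intro i
    have h1 : w' i / δ ≤ P / δ := by
      gcongr
      exact (hw'range i).2.le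
    calc ⌊w' i / δ⌋₊ ≤ ⌊P / δ⌋₊ := Nat.floor_le_floor h1
      _ ≤ ⌈P / δ⌉₊ := Nat.floor_le_ceil _
      _ = Kv d n := rfl
  set g : Fin d → Fin (Kv d n + 1) := fun i => ⟨⌊w' i / δ⌋₊, Nat.lt_succ_of_le (hfloor_le i)⟩
    with hgdef
  have hgp : ∀ i, gridpt d n g i = δ * (⌊w' i / δ⌋₊ : ℝ) := fun i => rfl
  have hclose : ∀ i, |w' i - gridpt d n g i| ≤ δ := by
    intro i
    have hnn : 0 ≤ w' i / δ := div_nonneg (hw'range i).1 hδpos.le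
    have h1 : δ * ((⌊w' i / δ⌋₊ : ℕ) : ℝ) ≤ w' i := by
      have h := Nat.floor_le hnn
      have := mul_le_mul_of_nonneg_left h hδpos.le
      calc δ * ((⌊w' i / δ⌋₊ : ℕ) : ℝ) ≤ δ * (w' i / δ) := this
        _ = w' i := by field_simp
    have h2 : w' i < δ * ((⌊w' i / δ⌋₊ : ℕ) : ℝ) + δ := by
      have h := Nat.lt_floor_add_one (w' i / δ)
      have := mul_lt_mul_of_pos_left h hδpos
      calc w' i = δ * (w' i / δ) := by field_simp
        _ < δ * (((⌊w' i / δ⌋₊ : ℕ) : ℝ) + 1) := this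
        _ = δ * ((⌊w' i / δ⌋₊ : ℕ) : ℝ) + δ := by ring
    rw [hgp i, abs_le]
    constructor <;> linarith
  -- θ difference
  have hθdiff : ∀ v : Fin d → Fin (MnD d n),
      |(inner ℝ w' (cubeCenter d n v) : ℝ) - (inner ℝ (gridpt d n g) (cubeCenter d n v) : ℝ)|
        ≤ d * δ := by
    intro v
    rw [inner_cubeCenter, inner_cubeCenter, ← Finset.sum_sub_distrib]
    calc |∑ i, (w' i * (1 / (2 * (MnD d n : ℝ)) + ((v i : ℕ) : ℝ) / (MnD d n : ℝ))
            - gridpt d n g i * (1 / (2 * (MnD d n : ℝ)) + ((v i : ℕ) : ℝ) / (MnD d n : ℝ)))|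
        ≤ ∑ i, |w' i * (1 / (2 * (MnD d n : ℝ)) + ((v i : ℕ) : ℝ) / (MnD d n : ℝ))
            - gridpt d n g i * (1 / (2 * (MnD d n : ℝ)) + ((v i : ℕ) : ℝ) / (MnD d n : ℝ))| :=
          Finset.abs_sum_le_sum_abs _ _
      _ ≤ ∑ _i : Fin d, δ := by
          apply Finset.sum_le_sum
          intro i _
          rw [← sub_mul, abs_mul]
          calc |w' i - gridpt d n g i| * |1 / (2 * (MnD d n : ℝ)) + ((v i : ℕ) : ℝ) / (MnD d n : ℝ)|
              ≤ δ * 1 := by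
                apply mul_le_mul (hclose i) ?_ (abs_nonneg _) hδpos.le
                rw [abs_of_nonneg (ha01 v i).1]
                exact (ha01 v i).2
            _ = δ := mul_one δ
      _ = d * δ := by rw [Finset.sum_const, Finset.card_univ, Fintype.card_fin, nsmul_eq_mul]
  -- sum difference
  have hSdiff : ‖S w' - S (gridpt d n g)‖ ≤ t / 2 := by
    rw [hSdef]
    simp only
    rw [← Finset.sum_sub_distrib]
    calc ‖∑ v, (((r v : ℝ) : ℂ) * Complex.exp (Complex.I * ((inner ℝ w' (cubeCenter d n v) : ℝ) : ℂ))
            - ((r v : ℝ) : ℂ) * Complex.exp (Complex.I * ((inner ℝ (gridpt d n g) (cubeCenter d n v) : ℝ) : ℂ)))‖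
        ≤ ∑ v, ‖((r v : ℝ) : ℂ) * Complex.exp (Complex.I * ((inner ℝ w' (cubeCenter d n v) : ℝ) : ℂ))
            - ((r v : ℝ) : ℂ) * Complex.exp (Complex.I * ((inner ℝ (gridpt d n g) (cubeCenter d n v) : ℝ) : ℂ))‖ :=
          norm_sum_le _ _
      _ ≤ ∑ _v : Fin d → Fin (MnD d n), 2 * (d * δ) := by
          apply Finset.sum_le_sum
          intro v _
          rw [← mul_sub, norm_mul, Complex.norm_real, Real.norm_eq_abs]
          calc |r v| * ‖Complex.exp (Complex.I * ((inner ℝ w' (cubeCenter d n v) : ℝ) : ℂ))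
                  - Complex.exp (Complex.I * ((inner ℝ (gridpt d n g) (cubeCenter d n v) : ℝ) : ℂ))‖
              ≤ 1 * (2 * (d * δ)) := by
                apply mul_le_mul (hr v) ?_ (norm_nonneg _) zero_le_one
                calc ‖_‖ ≤ 2 * |(inner ℝ w' (cubeCenter d n v) : ℝ)
                        - (inner ℝ (gridpt d n g) (cubeCenter d n v) : ℝ)| := exp_I_lip _ _
                  _ ≤ 2 * (d * δ) := by linarith [hθdiff v]
            _ = 2 * (d * δ) := one_mul _
      _ = ((MnD d n : ℝ) ^ d) * (2 * (d * δ)) := by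
          rw [Finset.sum_const, Finset.card_univ, nsmul_eq_mul]
          congr 1
          rw [Fintype.card_fun]
          push_cast
          simp
      _ = t / 2 := by
          rw [hδeq]
          have hMd : ((MnD d n : ℝ) ^ d) ≠ 0 := by positivity
          have hd0 : (d : ℝ) ≠ 0 := by linarith
          field_simp
          ring
  -- conclude
  have habs2 : t / 2 < ‖S (gridpt d n g)‖ := by
    have h1 := norm_sub_norm_le (S w') (S (gridpt d n g))
    have h2 : t < ‖S w‖ := hw
    rw [← hSper] at h2
    linarith
  have hre : (S (gridpt d n g)).re
      = ∑ v, Real.cos (inner ℝ (gridpt d n g) (cubeCenter d n v) : ℝ) * r v := by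
    rw [hSdef]
    simp only
    rw [Complex.re_sum]
    apply Finset.sum_congr rfl
    intro v _
    rw [(exp_I_re_im (r v) _).1, mul_comm]
  have him : (S (gridpt d n g)).im
      = ∑ v, Real.sin (inner ℝ (gridpt d n g) (cubeCenter d n v) : ℝ) * r v := by
    rw [hSdef]
    simp only
    rw [Complex.im_sum]
    apply Finset.sum_congr rfl
    intro v _
    rw [(exp_I_re_im (r v) _).2, mul_comm]
  have hsplit : t / 4 ≤ |(S (gridpt d n g)).re| ∨ t / 4 ≤ |(S (gridpt d n g)).im| := by
    by_contra hcon
    push_neg at hcon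
    have := Complex.norm_le_abs_re_add_abs_im (S (gridpt d n g))
    linarith [hcon.1, hcon.2]
  refine ⟨g, ?_⟩
  rcases hsplit with h | h
  · rcases le_abs.1 h with h' | h'
    · exact Or.inl (by rw [← hre]; exact h')
    · refine Or.inr (Or.inl ?_)
      rw [hre] at h'
      calc t / 4 ≤ -∑ v, Real.cos (inner ℝ (gridpt d n g) (cubeCenter d n v) : ℝ) * r v := h'
        _ = ∑ v, -Real.cos (inner ℝ (gridpt d n g) (cubeCenter d n v) : ℝ) * r v := by
            rw [← Finset.sum_neg_distrib]
            apply Finset.sum_congr rfl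
            intro v _
            ring
  · rcases le_abs.1 h with h' | h'
    · exact Or.inr (Or.inr (Or.inl (by rw [← him]; exact h')))
    · refine Or.inr (Or.inr (Or.inr ?_))
      rw [him] at h'
      calc t / 4 ≤ -∑ v, Real.sin (inner ℝ (gridpt d n g) (cubeCenter d n v) : ℝ) * r v := h'
        _ = ∑ v, -Real.sin (inner ℝ (gridpt d n g) (cubeCenter d n v) : ℝ) * r v := by
            rw [← Finset.sum_neg_distrib]
            apply Finset.sum_congr rfl
            intro v _
            ring

lemma main_core (d n : ℕ) (hd : 0 < d) (h3 : 3 ≤ n)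
    (hM1 : 1 ≤ MnD d n) (hlog1 : 1 ≤ Real.log n)
    (Ω : Type) [MeasurableSpace Ω] (μ : Measure Ω) [IsProbabilityMeasure μ]
    (C : (Fin d → Fin (MnD d n)) → Ω → ℝ)
    (hCmeas : ∀ v, Measurable (C v))
    (hCindep : iIndepFun (fun v => C v) μ)
    (hClaw : ∀ v, Measure.map (C v) μ
      = (2 : ℝ≥0∞)⁻¹ • (Measure.dirac (-1 : ℝ) + Measure.dirac (1 : ℝ))) :
    μ {ω : Ω | ∃ w : Evec d, tv d n < ‖∑ v, ((C v ω : ℝ) : ℂ) *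
        Complex.exp (Complex.I * ((inner ℝ w (cubeCenter d n v) : ℝ) : ℂ))‖}
      ≤ ENNReal.ofReal ((((Kv d n + 1) ^ d : ℕ) : ℝ)
          * (4 * Real.exp (-(Real.log n) ^ 2 / 32))) := by
  have hMr : (1 : ℝ) ≤ (MnD d n : ℝ) := by exact_mod_cast hM1
  have hMrpos : (0 : ℝ) < (MnD d n : ℝ) := by linarith
  have hMhalf : (1 : ℝ) ≤ (MnD d n : ℝ) ^ ((d : ℝ) / 2) :=
    Real.one_le_rpow hMr (by positivity)
  have ht1 : 1 ≤ tv d n := by rw [tv]; nlinarith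
  have htpos : 0 < tv d n := by linarith
  have htq : 0 < tv d n / 4 := by linarith
  -- good set
  set G : Set Ω := {ω | ∀ v, |C v ω| ≤ 1} with hGdef
  have hGc : μ Gᶜ = 0 := by
    have h := ae_all_iff.2 (fun v => ae_abs_le_one μ (C v) (hCmeas v) (hClaw v))
    rw [ae_iff] at h
    convert h using 2
    rfl
  -- union set
  set U : Set Ω := ⋃ g : Fin d → Fin (Kv d n + 1),
      ({ω | tv d n / 4 ≤ ∑ v, Real.cos (inner ℝ (gridpt d n g) (cubeCenter d n v) : ℝ) * C v ω} ∪
       ({ω | tv d n / 4 ≤ ∑ v, -Real.cos (inner ℝ (gridpt d n g) (cubeCenter d n v) : ℝ) * C v ω} ∪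
        ({ω | tv d n / 4 ≤ ∑ v, Real.sin (inner ℝ (gridpt d n g) (cubeCenter d n v) : ℝ) * C v ω} ∪
         {ω | tv d n / 4 ≤ ∑ v, -Real.sin (inner ℝ (gridpt d n g) (cubeCenter d n v) : ℝ) * C v ω})))
      with hUdef
  have hincl : {ω : Ω | ∃ w : Evec d, tv d n < ‖∑ v, ((C v ω : ℝ) : ℂ) *
        Complex.exp (Complex.I * ((inner ℝ w (cubeCenter d n v) : ℝ) : ℂ))‖} ⊆ U ∪ Gᶜ := by
    intro ω hω
    obtain ⟨w, hw⟩ := hω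
    by_cases hωG : ω ∈ G
    · left
      obtain ⟨g, hg⟩ := incl_core d n hd h3 hM1 hlog1 (fun v => C v ω) (fun v => hωG v) w hw
      rw [hUdef]
      refine Set.mem_iUnion.2 ⟨g, ?_⟩
      rcases hg with h | h | h | h
      · exact Or.inl h
      · exact Or.inr (Or.inl h)
      · exact Or.inr (Or.inr (Or.inl h))
      · exact Or.inr (Or.inr (Or.inr h))
    · exact Or.inr hωG
  -- single event bound
  have hcardM : (Fintype.card (Fin d → Fin (MnD d n)) : ℝ) = (MnD d n : ℝ) ^ d := by
    rw [Fintype.card_fun]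
    push_cast
    simp
  have hexpeq : -(tv d n / 4) ^ 2 / (2 * (Fintype.card (Fin d → Fin (MnD d n)) : ℝ))
      = -(Real.log n) ^ 2 / 32 := by
    rw [hcardM, tv]
    have hsq : ((MnD d n : ℝ) ^ ((d : ℝ) / 2)) ^ 2 = (MnD d n : ℝ) ^ d := by
      rw [← Real.rpow_natCast (MnD d n : ℝ) d, ← Real.rpow_natCast _ 2,
        ← Real.rpow_mul hMrpos.le]
      norm_num
    have hMd : (0:ℝ) < (MnD d n : ℝ) ^ d := by positivity
    field_simp
    nlinarith [hsq, hMd]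
  have hone : ∀ (cf : (Fin d → Fin (MnD d n)) → ℝ), (∀ v, |cf v| ≤ 1) →
      μ {ω | tv d n / 4 ≤ ∑ v, cf v * C v ω}
        ≤ ENNReal.ofReal (Real.exp (-(Real.log n) ^ 2 / 32)) := by
    intro cf hcf
    have := hoeffding_key μ (fun v => C v) hCmeas hCindep hClaw cf hcf (tv d n / 4) htq
    rwa [hexpeq] at this
  -- measure computation
  calc μ {ω : Ω | ∃ w : Evec d, tv d n < ‖∑ v, ((C v ω : ℝ) : ℂ) *
        Complex.exp (Complex.I * ((inner ℝ w (cubeCenter d n v) : ℝ) : ℂ))‖}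
      ≤ μ (U ∪ Gᶜ) := measure_mono hincl
    _ ≤ μ U + μ Gᶜ := measure_union_le _ _
    _ = μ U := by rw [hGc, add_zero]
    _ ≤ ∑ g : Fin d → Fin (Kv d n + 1), μ
        ({ω | tv d n / 4 ≤ ∑ v, Real.cos (inner ℝ (gridpt d n g) (cubeCenter d n v) : ℝ) * C v ω} ∪
         ({ω | tv d n / 4 ≤ ∑ v, -Real.cos (inner ℝ (gridpt d n g) (cubeCenter d n v) : ℝ) * C v ω} ∪
          ({ω | tv d n / 4 ≤ ∑ v, Real.sin (inner ℝ (gridpt d n g) (cubeCenter d n v) : ℝ) * C v ω} ∪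
           {ω | tv d n / 4 ≤ ∑ v, -Real.sin (inner ℝ (gridpt d n g) (cubeCenter d n v) : ℝ) * C v ω}))) := by
        rw [hUdef]
        exact (measure_iUnion_fintype_le _ _)
    _ ≤ ∑ _g : Fin d → Fin (Kv d n + 1),
        (4 * ENNReal.ofReal (Real.exp (-(Real.log n) ^ 2 / 32))) := by
        apply Finset.sum_le_sum
        intro g _
        have h1 := hone (fun v => Real.cos (inner ℝ (gridpt d n g) (cubeCenter d n v) : ℝ))
          (fun v => Real.abs_cos_le_one _)
        have h2 := hone (fun v => -Real.cos (inner ℝ (gridpt d n g) (cubeCenter d n v) : ℝ))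
          (fun v => by rw [abs_neg]; exact Real.abs_cos_le_one _)
        have h3' := hone (fun v => Real.sin (inner ℝ (gridpt d n g) (cubeCenter d n v) : ℝ))
          (fun v => Real.abs_sin_le_one _)
        have h4 := hone (fun v => -Real.sin (inner ℝ (gridpt d n g) (cubeCenter d n v) : ℝ))
          (fun v => by rw [abs_neg]; exact Real.abs_sin_le_one _)
        calc μ _ ≤ _ + (_ + (_ + _)) :=
              le_trans (measure_union_le _ _) (add_le_add_right
                (le_trans (measure_union_le _ _) (add_le_add_right (measure_union_le _ _) _)) _)
          _ ≤ ENNReal.ofReal (Real.exp (-(Real.log n) ^ 2 / 32)) +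
              (ENNReal.ofReal (Real.exp (-(Real.log n) ^ 2 / 32)) +
               (ENNReal.ofReal (Real.exp (-(Real.log n) ^ 2 / 32)) +
                ENNReal.ofReal (Real.exp (-(Real.log n) ^ 2 / 32)))) := by
              exact add_le_add h1 (add_le_add h2 (add_le_add h3' h4))
          _ = 4 * ENNReal.ofReal (Real.exp (-(Real.log n) ^ 2 / 32)) := by ring
    _ = (Fintype.card (Fin d → Fin (Kv d n + 1)) : ℝ≥0∞) *
        (4 * ENNReal.ofReal (Real.exp (-(Real.log n) ^ 2 / 32))) := by
        rw [Finset.sum_const, Finset.card_univ, nsmul_eq_mul]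
    _ = ENNReal.ofReal ((((Kv d n + 1) ^ d : ℕ) : ℝ)
          * (4 * Real.exp (-(Real.log n) ^ 2 / 32))) := by
        rw [Fintype.card_fun, Fintype.card_fin, Fintype.card_fin]
        rw [ENNReal.ofReal_mul (by positivity)]
        rw [ENNReal.ofReal_mul (by norm_num : (0:ℝ) ≤ 4)]
        rw [ENNReal.ofReal_natCast]
        norm_num


/-- with i.i.d. Rademacher signs `C_{n,j}`, the probability that some
`ω ∈ ℝ^d` violates `|Σ_j C_{n,j} e^{iω^T a_{n,j}}| ≤ (log n) M_n^{d/2}` is at most `c₄₂/n`. -/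
theorem statement19 (d : ℕ) (hd : 0 < d) :
    ∃ c42 : ℝ, 0 < c42 ∧ ∃ N : ℕ, ∀ n : ℕ, N ≤ n →
      ∀ (Ω : Type) (_ : MeasurableSpace Ω) (μ : Measure Ω), IsProbabilityMeasure μ →
      ∀ C : (Fin d → Fin (MnD d n)) → Ω → ℝ,
        (∀ v, Measurable (C v)) →
        iIndepFun (fun v => C v) μ →
        (∀ v, Measure.map (C v) μ
            = (2 : ℝ≥0∞)⁻¹ • (Measure.dirac (-1 : ℝ) + Measure.dirac (1 : ℝ))) →
        μ {ω : Ω | ∃ w : Evec d,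
            Real.log n * (MnD d n : ℝ) ^ ((d : ℝ) / 2) <
              ‖∑ v : Fin d → Fin (MnD d n),
                ((C v ω : ℝ) : ℂ) *
                  Complex.exp (Complex.I * ((inner ℝ w (cubeCenter d n v) : ℝ) : ℂ))‖}
          ≤ ENNReal.ofReal (c42 / n) := by
  obtain ⟨N, hN⟩ := arith d hd
  refine ⟨1, one_pos, N, ?_⟩
  intro n hn Ω _inst μ hμ C hCmeas hCindep hClaw
  haveI := hμ
  obtain ⟨h3, hbound⟩ := hN n hn
  have hM1 : 1 ≤ MnD d n := one_le_MnD d n (by omega)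
  have hlog1 : 1 ≤ Real.log n := log_ge_one h3
  have hmain := main_core d n hd h3 hM1 hlog1 Ω μ C hCmeas hCindep hClaw
  refine le_trans hmain ?_
  apply ENNReal.ofReal_le_ofReal
  rw [Nat.cast_pow]
  calc ((Kv d n + 1 : ℕ) : ℝ) ^ d * (4 * Real.exp (-(Real.log n) ^ 2 / 32))
      ≤ 1 / n := hbound
    _ = 1 / n := rfl

end
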